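/- Let 0 < p ≤ 1, γ > 0, ε > 0, let S be a real symmetric d×d matrix, and let W, Ŵ be real d×m matrices. Denote by wⁱ and ŵⁱ the i-th rows of W and Ŵ respectively, and let G be the d×d diagonal matrix with diagonal entries g_ii = (p/2)·(wⁱᵀwⁱ + ε)^{(p−2)/2}. If −Tr(ŴᵀSŴ) + γ·Tr(ŴᵀGŴ) ≤ −Tr(WᵀSW) + γ·Tr(WᵀGW), then −Tr(ŴᵀSŴ) + γ·Σ_{i=1}^{d}(ŵⁱᵀŵⁱ + ε)^{p/2} ≤ −Tr(WᵀSW) + γ·Σ_{i=1}^{d}(wⁱᵀwⁱ + ε)^{p/2}. (This is the descent property of the alternating update: minimizing the surrogate trace objective with G fixed does not increase the regularized objective −Tr(WᵀSW) + γ·Σᵢ(wⁱᵀwⁱ + ε)^{p/2}.) -/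

import Mathlib

open Matrix

lemma tangent_rpow {x y q : ℝ} (hx : 0 < x) (hy : 0 < y) (hq0 : 0 ≤ q) (hq1 : q ≤ 1) :
    y ^ q ≤ x ^ q + q * x ^ (q - 1) * (y - x) := by
  set s : ℝ := (y - x) / x with hs
  have hs1 : -1 ≤ s := by
    rw [hs, le_div_iff₀ hx]
    linarith
  have hber := rpow_one_add_le_one_add_mul_self hs1 hq0 hq1
  have hxy : y = x * (1 + s) := by
    rw [hs]; field_simp; ring
  have h1s : 0 ≤ 1 + s := by
    linarith
  calc y ^ q = (x * (1 + s)) ^ q := by rw [← hxy]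
    _ = x ^ q * (1 + s) ^ q := Real.mul_rpow hx.le h1s
    _ ≤ x ^ q * (1 + q * s) := by
        apply mul_le_mul_of_nonneg_left hber (Real.rpow_nonneg hx.le q)
    _ = x ^ q + q * (x ^ q / x) * (y - x) := by
        rw [hs]; field_simp
    _ = x ^ q + q * x ^ (q - 1) * (y - x) := by
        rw [← Real.rpow_sub_one hx.ne' q]

/-- Descent property of the alternating update: if the updated Ŵ does not increase the
surrogate trace objective −Tr(WᵀSW) + γ·Tr(WᵀGW) with G = G(W) fixed, then it does not
increase the regularized objective −Tr(WᵀSW) + γ·Σᵢ(wⁱᵀwⁱ + ε)^{p/2}. -/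
theorem stmt_3 (d m : ℕ) (p γ ε : ℝ) (hp0 : 0 < p) (hp1 : p ≤ 1) (hγ : 0 < γ) (hε : 0 < ε)
    (S : Matrix (Fin d) (Fin d) ℝ) (hS : S.IsSymm)
    (W What : Matrix (Fin d) (Fin m) ℝ)
    (G : Matrix (Fin d) (Fin d) ℝ)
    (hG : G = Matrix.diagonal
      (fun i => p / 2 * ((∑ j, W i j ^ 2) + ε) ^ ((p - 2) / 2)))
    (h : -(Whatᵀ * S * What).trace + γ * (Whatᵀ * G * What).trace ≤
          -(Wᵀ * S * W).trace + γ * (Wᵀ * G * W).trace) :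
    -(Whatᵀ * S * What).trace + γ * ∑ i, ((∑ j, What i j ^ 2) + ε) ^ (p / 2) ≤
      -(Wᵀ * S * W).trace + γ * ∑ i, ((∑ j, W i j ^ 2) + ε) ^ (p / 2) := by
  set a : Fin d → ℝ := fun i => (∑ j, W i j ^ 2) + ε with ha
  set b : Fin d → ℝ := fun i => (∑ j, What i j ^ 2) + ε with hb
  have hsum : ∀ i, (0:ℝ) ≤ ∑ j : Fin m, W i j ^ 2 := fun i =>
    Finset.sum_nonneg fun j _ => sq_nonneg _
  have hsum' : ∀ i, (0:ℝ) ≤ ∑ j : Fin m, What i j ^ 2 := fun i =>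
    Finset.sum_nonneg fun j _ => sq_nonneg _
  have hap : ∀ i, 0 < a i := fun i => by have := hsum i; simp only [ha]; linarith
  have hbp : ∀ i, 0 < b i := fun i => by have := hsum' i; simp only [hb]; linarith
  -- trace formula
  have htr : ∀ V : Matrix (Fin d) (Fin m) ℝ,
      (Vᵀ * G * V).trace = ∑ i, p / 2 * (a i) ^ ((p - 2) / 2) * ∑ j, V i j ^ 2 := by
    intro V
    subst hG
    simp only [Matrix.trace, Matrix.diag_apply, Matrix.mul_apply, Matrix.transpose_apply,
      Matrix.diagonal_apply, ite_mul, zero_mul, Finset.sum_ite_eq, Finset.mem_univ, if_true,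
      Matrix.diag]
    rw [Finset.sum_comm]
    refine Finset.sum_congr rfl fun i _ => ?_
    simp only [ha, Finset.mul_sum]
    refine Finset.sum_congr rfl fun j _ => ?_
    rw [Finset.sum_eq_single i]
    · simp only [if_true]; ring
    · intro k _ hk; simp [hk]
    · simp
  have key : ∀ i, b i ^ (p / 2) - p / 2 * (a i) ^ ((p - 2) / 2) * (∑ j, What i j ^ 2)
      ≤ a i ^ (p / 2) - p / 2 * (a i) ^ ((p - 2) / 2) * (∑ j, W i j ^ 2) := by
    intro i
    have := tangent_rpow (hap i) (hbp i) (by linarith : (0:ℝ) ≤ p / 2)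
      (by linarith : p / 2 ≤ 1)
    have hexp : p / 2 - 1 = (p - 2) / 2 := by ring
    rw [hexp] at this
    have hba : b i - a i = (∑ j, What i j ^ 2) - (∑ j, W i j ^ 2) := by
      simp [ha, hb]
    nlinarith [this, hba]
  have hkey : ∑ i, (b i ^ (p / 2) - p / 2 * (a i) ^ ((p - 2) / 2) * (∑ j, What i j ^ 2))
      ≤ ∑ i, (a i ^ (p / 2) - p / 2 * (a i) ^ ((p - 2) / 2) * (∑ j, W i j ^ 2)) :=
    Finset.sum_le_sum fun i _ => key i
  rw [Finset.sum_sub_distrib, Finset.sum_sub_distrib] at hkey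
  rw [htr What, htr W] at h
  have hγkey := mul_le_mul_of_nonneg_left hkey hγ.le
  simp only [mul_sub] at hγkey
  linarith
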